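/- (Reduced multialgebra of a resonant submultialgebra.) Let C be totally antisymmetric structure constants satisfying the generalized Jacobi identity, with degree map P : ι → I and subspace structure i : (Fin n → I) → Set I (C (a₁,…,aₙ) c ≠ 0 implies P(c) ∈ i(P(a₁),…,P(aₙ))), and let S be a finite commutative semigroup with subsets (S_p)_{p ∈ I} in resonance (S_{p₁}·⋯·S_{pₙ} ⊆ ⋂_{r ∈ i(p₁,…,pₙ)} S_r). Suppose each S_p is partitioned as S_p = Š_p ∪ Ŝ_p with Š_p ∩ Ŝ_p = ∅ and Ŝ_{p₁}·Š_{p₂}·⋯·Š_{pₙ} ⊆ ⋂_{r ∈ i(p₁,…,pₙ)} Ŝ_r for all p₁,…,pₙ ∈ I. Then the reduced structure constants on the index set Ř = {(a,α) : ι × S | α ∈ Š_{P(a)}}, defined by C̃ ((a₁,α₁),…,(aₙ,αₙ)) (c,γ) = C (a₁,…,aₙ) c if α₁·⋯·αₙ = γ and 0 otherwise, are totally antisymmetric under simultaneous permutation (with sign) of the n lower index pairs and satisfy the generalized Jacobi identity on Ř (with the intermediate summation index ranging over Ř); hence |Ǧ_R| is a higher-order Lie algebra of order n. -/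

import Mathlib

open scoped Classical

noncomputable section

/-- Total antisymmetry of structure constants. -/
def IsTotallyAntisymmetric {k ι : Type*} [CommRing k] {n : ℕ}
    (C : (Fin n → ι) → ι → k) : Prop :=
  ∀ (σ : Equiv.Perm (Fin n)) (i : Fin n → ι) (t : ι),
    C (i ∘ σ) t = (Equiv.Perm.sign σ : ℤ) • C i t

/-- The generalized Jacobi identity. -/
def SatisfiesGJI {k ι : Type*} [CommRing k] [Fintype ι] {n : ℕ}
    (C : (Fin n → ι) → ι → k) : Prop :=
  ∀ (j : Fin (2 * n - 1) → ι) (t : ι),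
    (∑ σ : Equiv.Perm (Fin (2 * n - 1)),
      (Equiv.Perm.sign σ : ℤ) •
        ∑ ρ : ι,
          C (fun l : Fin n => j (σ ⟨(l : ℕ), lt_of_lt_of_le l.isLt (by omega)⟩)) ρ *
          C (fun l : Fin n =>
              if hl : (l : ℕ) = 0 then ρ
              else j (σ ⟨n + (l : ℕ) - 1, by have := l.isLt; omega⟩)) t) = 0

/-- The product `α₁·α₂·⋯·αₙ` of a family of semigroup elements, computed in the
monoid `WithOne S` (for `n ≥ 1` it is the genuine semigroup product, coerced). -/
def wprod {S : Type*} [CommSemigroup S] {n : ℕ} (f : Fin n → S) : WithOne S :=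
  ∏ l, (f l : WithOne S)

/-- The reduced structure constants on the index set
`Ř = {(a,α) : ι × S | α ∈ Š_{P a}}`:
`C̃ ((a₁,α₁),…,(aₙ,αₙ)) (c,γ) = C (a₁,…,aₙ) c` if `α₁·⋯·αₙ = γ`, else `0`. -/
def reducedResonantC {k ι S I : Type*} [CommRing k] [CommSemigroup S] {n : ℕ}
    (C : (Fin n → ι) → ι → k) (P : ι → I) (Sc : I → Set S) :
    (Fin n → {x : ι × S // x.2 ∈ Sc (P x.1)}) →
      {x : ι × S // x.2 ∈ Sc (P x.1)} → k :=
  fun A t =>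
    if wprod (fun l => ((A l : ι × S)).2) = ((((t : ι × S)).2 : S) : WithOne S)
    then C (fun l => ((A l : ι × S)).1) ((t : ι × S)).1 else 0

theorem prodSplit {M : Type*} [CommMonoid M] {n : ℕ} (hn : 2 ≤ n) (g : Fin (2*n-1) → M) :
    ∏ m, g m = (∏ l : Fin n, g ⟨l, by omega⟩) *
      ∏ l : Fin (n-1), g ⟨n + l, by have := l.isLt; omega⟩ := by
  have h : 2*n-1 = n + (n-1) := by omega
  rw [← (finCongr h.symm).prod_comp g, Fin.prod_univ_add]
  congr 1

theorem prodIfZero {M : Type*} [CommMonoid M] {n : ℕ} (hn : 2 ≤ n) (β : M) (h : Fin n → M) :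
    ∏ l : Fin n, (if (l:ℕ) = 0 then β else h l) =
      β * ∏ l : Fin (n-1), h ⟨(l:ℕ)+1, by have := l.isLt; omega⟩ := by
  have h1 : n = (n-1) + 1 := by omega
  rw [← (finCongr h1.symm).prod_comp, Fin.prod_univ_succ]
  congr 1

/-- (Reduced multialgebra of a resonant submultialgebra.) In the resonance setting,
with disjoint partitions `Sp p = Š p ∪ Ŝ p` satisfying the reduction condition
`Ŝ_{p₁}·Š_{p₂}·⋯·Š_{pₙ} ⊆ ⋂_{r ∈ idx p} Ŝ_r`, the reduced structure constants are
totally antisymmetric and satisfy the generalized Jacobi identity on the finite index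
set `Ř = {(a,α) | α ∈ Š_{P a}}`; hence `|Ǧ_R|` is a higher-order Lie algebra of
order `n`. -/
theorem reducedResonantC_isMultialgebra {k ι S I : Type*} [CommRing k] [Fintype ι]
    [CommSemigroup S] [Fintype S] {n : ℕ} (hn : 2 ≤ n)
    (C : (Fin n → ι) → ι → k)
    (hA : IsTotallyAntisymmetric C) (hJ : SatisfiesGJI C)
    (P : ι → I) (idx : (Fin n → I) → Set I)
    (hstruct : ∀ (a : Fin n → ι) (c : ι), C a c ≠ 0 → P c ∈ idx (fun l => P (a l)))
    (Sp Sc Sh : I → Set S)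
    (hpart : ∀ p : I, Sp p = Sc p ∪ Sh p)
    (hdisj : ∀ p : I, Sc p ∩ Sh p = ∅)
    (hres : ∀ (p : Fin n → I) (s : Fin n → S), (∀ l, s l ∈ Sp (p l)) →
      ∀ r ∈ idx p, ∃ u ∈ Sp r, wprod s = (u : WithOne S))
    (hred : ∀ (p : Fin n → I) (s : Fin n → S),
      s ⟨0, by omega⟩ ∈ Sh (p ⟨0, by omega⟩) →
      (∀ l : Fin n, (l : ℕ) ≠ 0 → s l ∈ Sc (p l)) →
      ∀ r ∈ idx p, ∃ u ∈ Sh r, wprod s = (u : WithOne S)) :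
    IsTotallyAntisymmetric (reducedResonantC C P Sc) ∧
    SatisfiesGJI (reducedResonantC C P Sc) := by
  constructor
  · intro σ A t
    have h1 : wprod (fun l => ((A ∘ σ) l : ι × S).2) =
        wprod (fun l => ((A l : ι × S)).2) :=
      Equiv.prod_comp σ fun l => (((A l : ι × S)).2 : WithOne S)
    unfold reducedResonantC
    rw [h1]
    split_ifs with h
    · exact hA σ (fun l => ((A l : ι × S)).1) ((t : ι × S)).1
    · simp
  · intro j t
    set a : Fin (2*n-1) → ι := fun m => ((j m : ι × S)).1 with ha
    set α : Fin (2*n-1) → S := fun m => ((j m : ι × S)).2 with hα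
    set γ : S := ((t : ι × S)).2 with hγ
    set c : ι := ((t : ι × S)).1 with hc
    have hγSc : γ ∈ Sc (P c) := t.2
    have hScSp : ∀ p x, x ∈ Sc p → x ∈ Sh p ∨ True := fun _ _ _ => Or.inr trivial
    have hScSp' : ∀ p x, x ∈ Sc p → x ∈ Sp p := fun p x hx => by
      rw [hpart p]; exact Or.inl hx
    have key : ∀ σ : Equiv.Perm (Fin (2*n-1)),
        (∑ ρ : {x : ι × S // x.2 ∈ Sc (P x.1)},
          reducedResonantC C P Sc
            (fun l : Fin n => j (σ ⟨(l : ℕ), lt_of_lt_of_le l.isLt (by omega)⟩)) ρ *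
          reducedResonantC C P Sc
            (fun l : Fin n =>
              if hl : (l : ℕ) = 0 then ρ
              else j (σ ⟨n + (l : ℕ) - 1, by have := l.isLt; omega⟩)) t)
        = if wprod α = (γ : WithOne S) then
            ∑ r : ι,
              C (fun l : Fin n => a (σ ⟨(l : ℕ), lt_of_lt_of_le l.isLt (by omega)⟩)) r *
              C (fun l : Fin n =>
                  if hl : (l : ℕ) = 0 then r
                  else a (σ ⟨n + (l : ℕ) - 1, by have := l.isLt; omega⟩)) c
          else 0 := by
      intro σ
      set a1 : Fin n → ι :=
        fun l => a (σ ⟨(l : ℕ), lt_of_lt_of_le l.isLt (by omega)⟩) with ha1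
      set s1 : Fin n → S :=
        fun l => α (σ ⟨(l : ℕ), lt_of_lt_of_le l.isLt (by omega)⟩) with hs1
      set W1 : WithOne S := wprod s1 with hW1
      set w2 : WithOne S :=
        ∏ l : Fin (n-1), ((α (σ ⟨n + (l : ℕ), by have := l.isLt; omega⟩) : S) : WithOne S)
        with hw2
      have hsplit : W1 * w2 = wprod α := by
        calc W1 * w2 = ∏ m : Fin (2*n-1), ((α (σ m) : S) : WithOne S) :=
              (prodSplit hn (fun m => ((α (σ m) : S) : WithOne S))).symm
          _ = ∏ m : Fin (2*n-1), ((α m : S) : WithOne S) :=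
              Equiv.prod_comp σ fun m => ((α m : S) : WithOne S)
          _ = wprod α := rfl
      have hdprod : ∀ β : S,
          wprod (fun l : Fin n =>
            if hl : (l : ℕ) = 0 then β
            else α (σ ⟨n + (l : ℕ) - 1, by have := l.isLt; omega⟩))
          = (β : WithOne S) * w2 := by
        intro β
        rw [wprod]
        have hco : ∀ l : Fin n,
            (((if hl : (l : ℕ) = 0 then β
              else α (σ ⟨n + (l : ℕ) - 1, by have := l.isLt; omega⟩)) : S) : WithOne S)
            = if (l : ℕ) = 0 then (β : WithOne S)
              else ((α (σ ⟨n + (l : ℕ) - 1, by have := l.isLt; omega⟩) : S) : WithOne S) := by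
          intro l
          split_ifs <;> rfl
        rw [Finset.prod_congr rfl fun l _ => hco l, prodIfZero hn]
        congr 1
      -- rewrite the second reduced constant
      have hC2 : ∀ ρ : {x : ι × S // x.2 ∈ Sc (P x.1)},
          reducedResonantC C P Sc
            (fun l : Fin n =>
              if hl : (l : ℕ) = 0 then ρ
              else j (σ ⟨n + (l : ℕ) - 1, by have := l.isLt; omega⟩)) t
          = if ((((ρ : ι × S)).2 : S) : WithOne S) * w2 = (γ : WithOne S) then
              C (fun l : Fin n =>
                  if hl : (l : ℕ) = 0 then ((ρ : ι × S)).1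
                  else a (σ ⟨n + (l : ℕ) - 1, by have := l.isLt; omega⟩)) c
            else 0 := by
        intro ρ
        unfold reducedResonantC
        have e2 : (fun l : Fin n =>
            (Subtype.val (if hl : (l : ℕ) = 0 then ρ
              else j (σ ⟨n + (l : ℕ) - 1, by have := l.isLt; omega⟩))).2)
            = (fun l : Fin n =>
              if hl : (l : ℕ) = 0 then ((ρ : ι × S)).2
              else α (σ ⟨n + (l : ℕ) - 1, by have := l.isLt; omega⟩)) := by
          funext l
          by_cases h : (l : ℕ) = 0 <;> simp [h] <;> rfl
        have e1 : (fun l : Fin n =>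
            (Subtype.val (if hl : (l : ℕ) = 0 then ρ
              else j (σ ⟨n + (l : ℕ) - 1, by have := l.isLt; omega⟩))).1)
            = (fun l : Fin n =>
              if hl : (l : ℕ) = 0 then ((ρ : ι × S)).1
              else a (σ ⟨n + (l : ℕ) - 1, by have := l.isLt; omega⟩)) := by
          funext l
          by_cases h : (l : ℕ) = 0 <;> simp [h] <;> rfl
        rw [e2, e1, hdprod]
      -- pass to a sum over ι × S
      set f : ι × S → k := fun x =>
        (if W1 = ((x.2 : S) : WithOne S) then C a1 x.1 else 0) *
        (if ((x.2 : S) : WithOne S) * w2 = (γ : WithOne S) then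
            C (fun l : Fin n =>
                if hl : (l : ℕ) = 0 then x.1
                else a (σ ⟨n + (l : ℕ) - 1, by have := l.isLt; omega⟩)) c
          else 0) with hf
      have hfρ : ∀ ρ : {x : ι × S // x.2 ∈ Sc (P x.1)},
          reducedResonantC C P Sc
            (fun l : Fin n => j (σ ⟨(l : ℕ), lt_of_lt_of_le l.isLt (by omega)⟩)) ρ *
          reducedResonantC C P Sc
            (fun l : Fin n =>
              if hl : (l : ℕ) = 0 then ρ
              else j (σ ⟨n + (l : ℕ) - 1, by have := l.isLt; omega⟩)) t
          = f (ρ : ι × S) := by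
        intro ρ
        rw [hC2 ρ]
        rfl
      rw [Finset.sum_congr rfl fun ρ _ => hfρ ρ]
      have hsub : (∑ ρ : {x : ι × S // x.2 ∈ Sc (P x.1)}, f (ρ : ι × S))
          = ∑ x : ι × S, if x.2 ∈ Sc (P x.1) then f x else 0 := by
        rw [← Finset.sum_filter]
        exact (Finset.sum_subtype _ (by simp) f).symm
      rw [hsub, Fintype.sum_prod_type, ← hsplit]
      have target : ∀ r : ι,
          (∑ β : S, if β ∈ Sc (P r) then f (r, β) else 0)
          = if W1 * w2 = (γ : WithOne S) then
              C a1 r *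
              C (fun l : Fin n =>
                  if hl : (l : ℕ) = 0 then r
                  else a (σ ⟨n + (l : ℕ) - 1, by have := l.isLt; omega⟩)) c
            else 0 := by
        intro r
        by_cases hC1 : C a1 r = 0
        · simp [hf, hC1]
        · have hPr : P r ∈ idx (fun l => P (a1 l)) := hstruct a1 r hC1
          have hmem : ∀ l, s1 l ∈ Sp (P (a1 l)) := fun l =>
            hScSp' _ _ (j (σ ⟨(l : ℕ), lt_of_lt_of_le l.isLt (by omega)⟩)).2
          obtain ⟨u, huSp, hwu⟩ := hres (fun l => P (a1 l)) s1 hmem (P r) hPr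
          have hwu' : W1 = ((u : S) : WithOne S) := hwu
          -- hwu : wprod s1 = ↑u, i.e. W1 = ↑u
          by_cases huSc : u ∈ Sc (P r)
          · rw [Finset.sum_eq_single u]
            · rw [if_pos huSc, hf]
              simp only []
              rw [if_pos hwu', hwu']
              split_ifs with h
              · rfl
              · exact mul_zero _
            · intro β _ hβu
              have hne : W1 ≠ ((β : S) : WithOne S) := by
                rw [hwu']
                exact fun h => hβu (WithOne.coe_inj.mp h).symm
              simp [hf, hne]
            · intro hu; exact absurd (Finset.mem_univ u) hu
          · have huSh : u ∈ Sh (P r) := by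
              have := huSp
              rw [hpart (P r)] at this
              rcases this with h | h
              · exact absurd h huSc
              · exact h
            have hL : ∀ β : S, (if β ∈ Sc (P r) then f (r, β) else 0) = 0 := by
              intro β
              split_ifs with hβ
              · have hne : W1 ≠ ((β : S) : WithOne S) := by
                  rw [hwu']
                  intro h
                  exact huSc ((WithOne.coe_inj.mp h) ▸ hβ)
                simp [hf, hne]
              · rfl
            rw [Finset.sum_congr rfl fun β _ => hL β, Finset.sum_const_zero, hwu']
            split_ifs with hcond
            · by_cases hC2' : C (fun l : Fin n =>
                  if hl : (l : ℕ) = 0 then r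
                  else a (σ ⟨n + (l : ℕ) - 1, by have := l.isLt; omega⟩)) c = 0
              · rw [hC2', mul_zero]
              · exfalso
                set a2 : Fin n → ι := fun l : Fin n =>
                  if hl : (l : ℕ) = 0 then r
                  else a (σ ⟨n + (l : ℕ) - 1, by have := l.isLt; omega⟩) with ha2
                set s2 : Fin n → S := fun l : Fin n =>
                  if hl : (l : ℕ) = 0 then u
                  else α (σ ⟨n + (l : ℕ) - 1, by have := l.isLt; omega⟩) with hs2
                have h0 : s2 ⟨0, by omega⟩ ∈ Sh (P (a2 ⟨0, by omega⟩)) := by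
                  simp [hs2, ha2, huSh]
                have hlmem : ∀ l : Fin n, (l : ℕ) ≠ 0 → s2 l ∈ Sc (P (a2 l)) := by
                  intro l hl0
                  simp only [hs2, ha2, dif_neg hl0]
                  exact (j (σ ⟨n + (l : ℕ) - 1, by have := l.isLt; omega⟩)).2
                have hPc : P c ∈ idx (fun l => P (a2 l)) := hstruct a2 c hC2'
                obtain ⟨v, hvSh, hwv⟩ := hred (fun l => P (a2 l)) s2 h0 hlmem (P c) hPc
                have hws2 : wprod s2 = ((u : S) : WithOne S) * w2 := hdprod u
                rw [hws2, hcond] at hwv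
                have hvγ : v = γ := (WithOne.coe_inj.mp hwv.symm)
                have : γ ∈ Sc (P c) ∩ Sh (P c) := ⟨hγSc, hvγ ▸ hvSh⟩
                rw [hdisj (P c)] at this
                exact this
            · rfl
      rw [Finset.sum_congr rfl fun r _ => target r]
      split_ifs with h
      · rfl
      · exact Finset.sum_const_zero
    -- finish: apply the GJI of C
    refine Eq.trans (Finset.sum_congr rfl fun σ _ =>
      congrArg (fun z : k => ((Equiv.Perm.sign σ : ℤ)) • z) (key σ)) ?_
    by_cases hw : wprod α = (γ : WithOne S)
    · simp only [if_pos hw]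
      exact hJ a c
    · simp only [if_neg hw, smul_zero, Finset.sum_const_zero]
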